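/- Let P ∈ ℂ[X] be a polynomial of degree at most N−1. Then Y_1^∘(P(z_1)) = x_{12}∘x_{13}∘⋯∘x_{1N}(P(z_1)) is a polynomial in z_1,…,z_N, and its evaluation at (z_1,…,z_N) = (ω, ω², …, ω^N) equals v^{N−1} · P(t^{−1}·ω). -/

import Mathlib

open scoped BigOperators

noncomputable section

namespace Aux

open Polynomial Finset


variable {N : ℕ} {ω : ℂ}


-- PF1
lemma PF1 (hN : 0 < N) (hω : IsPrimitiveRoot ω N) : ∏ k ∈ range N, (X - C (ω ^ k)) = X ^ N - C 1 := by
  have h1 : (X:ℂ[X]) ^ N - 1 = ∏ ζ ∈ nthRootsFinset N (1 : ℂ), (X - C ζ) :=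
    X_pow_sub_one_eq_prod hN hω
  have h2 : nthRootsFinset N (1 : ℂ) = (range N).image (ω ^ ·) := by
    refine (Finset.eq_of_subset_of_card_le ?_ ?_).symm
    · intro x hx
      simp only [mem_image, mem_range] at hx
      obtain ⟨k, hk, rfl⟩ := hx
      exact (mem_nthRootsFinset hN (1 : ℂ)).2 (by rw [← pow_mul, mul_comm, pow_mul, hω.pow_eq_one, one_pow])
    · rw [hω.card_nthRootsFinset, Finset.card_image_of_injOn]
      · simp
      · intro a ha b hb hab
        exact hω.pow_inj (mem_range.1 (by simpa using ha)) (mem_range.1 (by simpa using hb)) hab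
  rw [h2, Finset.prod_image] at h1
  · rw [← h1]; simp
  · intro a ha b hb hab
    exact hω.pow_inj (mem_range.1 ha) (mem_range.1 hb) hab

-- PF2
lemma PF2 (hN : 0 < N) (hω : IsPrimitiveRoot ω N) : ∏ m ∈ Icc 1 (N-1), (X - C (ω ^ m)) = ∑ i ∈ range N, (X:ℂ[X]) ^ i := by
  have key : (X - C (1:ℂ)) * ∏ m ∈ Icc 1 (N-1), (X - C (ω ^ m))
      = (X - C 1) * ∑ i ∈ range N, (X:ℂ[X]) ^ i := by
    have hsplit : range N = insert 0 (Icc 1 (N-1)) := by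
      ext k; simp only [mem_range, mem_insert, mem_Icc]; omega
    have := PF1 hN hω
    rw [hsplit, Finset.prod_insert (by simp)] at this
    rw [pow_zero] at this
    rw [this]
    have h3 := geom_sum_mul (X:ℂ[X]) N
    rw [mul_comm] at h3
    rw [map_one, ← h3]
  have hX1 : (X - C (1:ℂ)) ≠ 0 := X_sub_C_ne_zero 1
  exact mul_left_cancel₀ hX1 key

-- PF3
lemma PF3 (hN : 0 < N) (hω : IsPrimitiveRoot ω N) : ∏ m ∈ Icc 1 (N-1), ((1:ℂ) - ω ^ m) = N := by
  have := congrArg (Polynomial.eval 1) (PF2 hN hω)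
  simp only [eval_prod, eval_sub, eval_X, eval_C, eval_finset_sum, eval_pow, one_pow] at this
  simpa using this


lemma pow_mod (hω : IsPrimitiveRoot ω N) (a : ℕ) : ω ^ (a % N) = ω ^ a := by
  conv_rhs => rw [← Nat.mod_add_div a N, pow_add, pow_mul, hω.pow_eq_one, one_pow, mul_one]

lemma hdist (hN : 0 < N) (hω : IsPrimitiveRoot ω N) {j k : ℕ} (hj1 : 1 ≤ j) (hjN : j ≤ N)
    (hk1 : 1 ≤ k) (hkN : k ≤ N) (hjk : j ≠ k) : ω ^ j ≠ ω ^ k := by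
  wlog hlt : k < j generalizing j k
  · intro he
    exact this hk1 hkN hj1 hjN (Ne.symm hjk) (by omega) he.symm
  intro he
  have hω0 : ω ^ k ≠ 0 := pow_ne_zero _ (hω.ne_zero hN.ne')
  have : ω ^ (j - k) = 1 := by
    have : ω ^ k * ω ^ (j - k) = ω ^ k * 1 := by
      rw [← pow_add, mul_one, Nat.add_sub_cancel' hlt.le, he]
    exact mul_left_cancel₀ hω0 this
  have := (hω.pow_eq_one_iff_dvd _).1 this
  have := Nat.le_of_dvd (by omega) this
  omega

/-- P1 -/
lemma P1 (hω : IsPrimitiveRoot ω N) (x : ℂ) :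
    ∏ k ∈ Icc 2 N, (x * ω - ω ^ k) = ω ^ (N - 1) * ∏ m ∈ Icc 1 (N - 1), (x - ω ^ m) := by
  have : ∏ k ∈ Icc 2 N, (x * ω - ω ^ k) = ∏ m ∈ Icc 1 (N-1), (ω * (x - ω ^ m)) := by
    refine prod_bij' (fun k _ => k - 1) (fun m _ => m + 1) ?_ ?_ ?_ ?_ ?_
    · intro a ha; simp only [mem_Icc] at ha ⊢; omega
    · intro a ha; simp only [mem_Icc] at ha ⊢; omega
    · intro a ha; simp only [mem_Icc] at ha; beta_reduce; omega
    · intro a ha; simp only [mem_Icc] at ha; beta_reduce; omega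
    · intro a ha
      simp only [mem_Icc] at ha
      have : ω ^ a = ω * ω ^ (a - 1) := by
        rw [← pow_succ']
        congr 1; omega
      rw [this]; ring
  rw [this, prod_mul_distrib, prod_const, Nat.card_Icc]
  have hc : N - 1 + 1 - 1 = N - 1 := by omega
  rw [hc]

/-- P2 -/
lemma P2 (hN : 0 < N) (hω : IsPrimitiveRoot ω N) {j : ℕ} (hj : j ∈ Icc 2 N) (x : ℂ) :
    ∏ k ∈ (Icc 2 N).erase j, (x * ω ^ j - ω ^ k)
      = ω ^ (j * (N - 2)) * ∏ m ∈ (Icc 1 (N - 1)).erase (N + 1 - j), (x - ω ^ m) := by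
  simp only [mem_Icc] at hj
  have key : ∏ k ∈ (Icc 2 N).erase j, (x * ω ^ j - ω ^ k)
      = ∏ m ∈ (Icc 1 (N - 1)).erase (N + 1 - j), (ω ^ j * (x - ω ^ m)) := by
    refine prod_bij' (fun k _ => if j < k then k - j else k + N - j)
      (fun m _ => if m ≤ N - j then m + j else m + j - N) ?_ ?_ ?_ ?_ ?_
    · intro a ha; simp only [mem_erase, mem_Icc] at ha ⊢; split_ifs <;> omega
    · intro a ha; simp only [mem_erase, mem_Icc] at ha ⊢; split_ifs <;> omega
    · intro a ha; simp only [mem_erase, mem_Icc] at ha; beta_reduce; split_ifs <;> omega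
    · intro a ha; simp only [mem_erase, mem_Icc] at ha; beta_reduce; split_ifs <;> omega
    · intro a ha
      simp only [mem_erase, mem_Icc] at ha
      have : ω ^ a = ω ^ j * ω ^ (if j < a then a - j else a + N - j) := by
        rw [← pow_add]
        split_ifs with h
        · congr 1; omega
        · have : j + (a + N - j) = a + N := by omega
          rw [this, pow_add, hω.pow_eq_one, mul_one]
      rw [this]; ring
  rw [key, prod_mul_distrib, prod_const, ← pow_mul]
  have hc : #((Icc 1 (N-1)).erase (N+1-j)) = N - 2 := by
    rw [Finset.card_erase_of_mem (by simp only [mem_Icc]; omega), Nat.card_Icc]; omega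
  rw [hc]

/-- P3 -/
lemma P3 (hN : 0 < N) (hω : IsPrimitiveRoot ω N) {i : ℕ} (hi : i ∈ Icc 1 (N - 1)) :
    ∏ m ∈ (range N).erase i, (ω ^ i - ω ^ m) = ω ^ (i * (N - 1)) * N := by
  simp only [mem_Icc] at hi
  have key : ∏ m ∈ (range N).erase i, (ω ^ i - ω ^ m)
      = ∏ m ∈ Icc 1 (N - 1), (ω ^ i * (1 - ω ^ m)) := by
    refine prod_bij' (fun m _ => if i < m then m - i else m + N - i)
      (fun m _ => if m ≤ N - 1 - i then m + i else m + i - N) ?_ ?_ ?_ ?_ ?_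
    · intro a ha; simp only [mem_erase, mem_Icc, mem_range] at ha ⊢; split_ifs <;> omega
    · intro a ha; simp only [mem_erase, mem_Icc, mem_range] at ha ⊢; split_ifs <;> omega
    · intro a ha; simp only [mem_erase, mem_Icc, mem_range] at ha; beta_reduce; split_ifs <;> omega
    · intro a ha; simp only [mem_erase, mem_Icc, mem_range] at ha; beta_reduce; split_ifs <;> omega
    · intro a ha
      simp only [mem_erase, mem_range] at ha
      have : ω ^ a = ω ^ i * ω ^ (if i < a then a - i else a + N - i) := by
        rw [← pow_add]
        split_ifs with h
        · congr 1; omega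
        · have : i + (a + N - i) = a + N := by omega
          rw [this, pow_add, hω.pow_eq_one, mul_one]
      rw [this]; ring
  rw [key, prod_mul_distrib, prod_const, ← pow_mul, Nat.card_Icc, PF3 hN hω]
  have hc : N - 1 + 1 - 1 = N - 1 := by omega
  rw [hc]



-- part d


def af (v x y : ℂ) : ℂ := v⁻¹ * (v ^ 2 * x - y) / (x - y)
def bf (v x y : ℂ) : ℂ := -(v⁻¹ * (v ^ 2 - 1) * y) / (x - y)

lemma T0 {v x y : ℂ} (hv : v ≠ 0) (h : x ≠ y) :
    (x - y) * af v x y = v⁻¹ * (v ^ 2 * x - y) := by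
  have h' : x - y ≠ 0 := sub_ne_zero.2 h
  unfold af; field_simp

lemma T1 {v x y : ℂ} (hv : v ≠ 0) (h : x ≠ y) :
    (x - y) * bf v x y = -(v⁻¹ * (v ^ 2 - 1) * y) := by
  have h' : x - y ≠ 0 := sub_ne_zero.2 h
  unfold bf; field_simp

lemma T2 {v x y w : ℂ} (hv : v ≠ 0) (hxw : x ≠ w) (hyw : y ≠ w) :
    (x - y) * (bf v x w * af v w y)
      = v⁻¹ * ((v ^ 2 * x - y) * bf v x w - (v ^ 2 - 1) * y * bf v y w) := by
  unfold af bf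
  have h1 : x - w ≠ 0 := sub_ne_zero.2 hxw
  have h2 : y - w ≠ 0 := sub_ne_zero.2 hyw
  have h3 : w - y ≠ 0 := sub_ne_zero.2 (Ne.symm hyw)
  field_simp
  ring

/-- The target value. -/
def rhs (v ω : ℂ) (P : Polynomial ℂ) (N m : ℕ) (ζ : ℂ) : ℂ :=
  (∏ k ∈ Icc m N, af v ζ (ω ^ k)) * P.eval ζ
    + ∑ j ∈ Icc m N,
        bf v ζ (ω ^ j) * (∏ k ∈ (Icc m N).erase j, af v (ω ^ j) (ω ^ k)) * P.eval (ω ^ j)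

lemma rhs_step {N : ℕ} {ω : ℂ} (hN : 0 < N) (hω : IsPrimitiveRoot ω N) {v : ℂ} (hv : v ≠ 0)
    (P : Polynomial ℂ) {m : ℕ} (hm2 : 2 ≤ m) (hmN : m ≤ N) {ζ : ℂ}
    (hζ : ∀ k, m ≤ k → k ≤ N → ζ ≠ ω ^ k) :
    (ζ - ω ^ m) * rhs v ω P N m ζ
      = v⁻¹ * ((v ^ 2 * ζ - ω ^ m) * rhs v ω P N (m + 1) ζ
          - (v ^ 2 - 1) * ω ^ m * rhs v ω P N (m + 1) (ω ^ m)) := by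
  have hdist : ∀ j k : ℕ, 1 ≤ j → j ≤ N → 1 ≤ k → k ≤ N → j ≠ k → ω ^ j ≠ ω ^ k :=
    fun a b h1 h2 h3 h4 h5 => hdist hN hω h1 h2 h3 h4 h5
  have hsplit : Icc m N = insert m (Icc (m + 1) N) := by
    ext k; simp only [mem_insert, mem_Icc]; omega
  have hmnot : m ∉ Icc (m + 1) N := by simp [mem_Icc]
  have hζm : ζ ≠ ω ^ m := hζ m le_rfl hmN
  unfold rhs
  rw [hsplit, prod_insert hmnot, sum_insert hmnot, erase_insert hmnot]
  have hsum_rw : ∑ j ∈ Icc (m+1) N,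
        bf v ζ (ω ^ j) * (∏ k ∈ (insert m (Icc (m+1) N)).erase j, af v (ω ^ j) (ω ^ k))
          * P.eval (ω ^ j)
      = ∑ j ∈ Icc (m+1) N,
        bf v ζ (ω ^ j) * ((af v (ω ^ j) (ω ^ m)) * ∏ k ∈ (Icc (m+1) N).erase j, af v (ω ^ j) (ω ^ k))
          * P.eval (ω ^ j) := by
    refine Finset.sum_congr rfl fun j hj => ?_
    simp only [mem_Icc] at hj
    rw [Finset.erase_insert_of_ne (by omega : m ≠ j),
      prod_insert (fun hmem => hmnot (Finset.mem_of_mem_erase hmem))]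
  rw [hsum_rw]
  -- key per-term identity, summed
  have hsum : (ζ - ω ^ m) * ∑ j ∈ Icc (m+1) N,
        bf v ζ (ω ^ j) * ((af v (ω ^ j) (ω ^ m)) * ∏ k ∈ (Icc (m+1) N).erase j, af v (ω ^ j) (ω ^ k))
          * P.eval (ω ^ j)
      = v⁻¹ * (v ^ 2 * ζ - ω ^ m) * ∑ j ∈ Icc (m+1) N,
          bf v ζ (ω ^ j) * (∏ k ∈ (Icc (m+1) N).erase j, af v (ω ^ j) (ω ^ k)) * P.eval (ω ^ j)
        - v⁻¹ * (v ^ 2 - 1) * ω ^ m * ∑ j ∈ Icc (m+1) N,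
          bf v (ω ^ m) (ω ^ j) * (∏ k ∈ (Icc (m+1) N).erase j, af v (ω ^ j) (ω ^ k)) * P.eval (ω ^ j) := by
    rw [Finset.mul_sum, Finset.mul_sum, Finset.mul_sum, ← Finset.sum_sub_distrib]
    refine Finset.sum_congr rfl fun j hj => ?_
    simp only [mem_Icc] at hj
    have hζj : ζ ≠ ω ^ j := hζ j (by omega) (by omega)
    have hmj : ω ^ m ≠ ω ^ j := hdist m j (by omega) hmN (by omega) (by omega) (by omega)
    have h2 := T2 (v := v) hv hζj hmj
    linear_combination ((∏ k ∈ (Icc (m+1) N).erase j, af v (ω ^ j) (ω ^ k)) * P.eval (ω ^ j)) * h2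
  have h0' := T0 (y := ω ^ m) hv hζm
  have h1' := T1 (y := ω ^ m) hv hζm
  linear_combination hsum + ((∏ k ∈ Icc (m+1) N, af v ζ (ω ^ k)) * P.eval ζ) * h0'
    + ((∏ k ∈ Icc (m+1) N, af v (ω ^ m) (ω ^ k)) * P.eval (ω ^ m)) * h1'



lemma CORE {N : ℕ} {ω : ℂ} (hN : 0 < N) (hω : IsPrimitiveRoot ω N) {r : ℕ} (hr : r < N)
    (x : ℂ) :
    (∏ m ∈ Icc 1 (N - 1), (x - ω ^ m)) * ω ^ r
      + (x - 1) * ∑ l ∈ Icc 1 (N - 1),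
          (ω ^ (N + 1 - l)) ^ r * ∏ m ∈ (Icc 1 (N - 1)).erase l, (x - ω ^ m)
      = N * x ^ (N - 1 - r) * ω ^ r := by
  rcases Nat.lt_or_ge N 2 with hN1 | hN2
  · -- N = 1
    interval_cases N
    simp at hr
    subst hr
    simp
  -- define the polynomial
  set G : ℂ[X] := ∏ m ∈ Icc 1 (N - 1), (X - C (ω ^ m)) with hG
  set PP : ℂ[X] := C (ω ^ r) * G
      + (X - C 1) * ∑ l ∈ Icc 1 (N - 1), C ((ω ^ (N + 1 - l)) ^ r)
          * ∏ m ∈ (Icc 1 (N - 1)).erase l, (X - C (ω ^ m))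
      - C ((N : ℂ) * ω ^ r) * X ^ (N - 1 - r) with hPP
  have hdegG : G.natDegree ≤ N - 1 := by
    refine le_trans (Polynomial.natDegree_prod_le _ _) ?_
    have : ∀ m ∈ Icc 1 (N - 1), (X - C (ω ^ m)).natDegree ≤ 1 := fun m _ =>
      le_of_eq (natDegree_X_sub_C _)
    refine le_trans (Finset.sum_le_sum this) ?_
    rw [Finset.sum_const, smul_eq_mul, mul_one, Nat.card_Icc]
    omega
  have hdegPP : PP.natDegree < N := by
    have h1 : (C (ω ^ r) * G).natDegree ≤ N - 1 :=
      le_trans (natDegree_C_mul_le _ _) hdegG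
    have h2 : ((X - C (1:ℂ)) * ∑ l ∈ Icc 1 (N - 1), C ((ω ^ (N + 1 - l)) ^ r)
        * ∏ m ∈ (Icc 1 (N - 1)).erase l, (X - C (ω ^ m))).natDegree ≤ N - 1 := by
      refine le_trans (natDegree_mul_le) ?_
      have hs : (∑ l ∈ Icc 1 (N - 1), C ((ω ^ (N + 1 - l)) ^ r)
          * ∏ m ∈ (Icc 1 (N - 1)).erase l, (X - C (ω ^ m))).natDegree ≤ N - 2 := by
        refine le_trans (natDegree_sum_le _ _) ?_
        rw [Finset.fold_max_le]
        refine ⟨by omega, fun l hl => ?_⟩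
        refine le_trans (natDegree_C_mul_le _ _) ?_
        refine le_trans (Polynomial.natDegree_prod_le _ _) ?_
        refine le_trans (Finset.sum_le_sum fun m _ => le_of_eq (natDegree_X_sub_C _)) ?_
        rw [Finset.sum_const, smul_eq_mul, mul_one, Finset.card_erase_of_mem hl, Nat.card_Icc]
        omega
      have hx1 : ((X : ℂ[X]) - C 1).natDegree ≤ 1 := le_of_eq (natDegree_X_sub_C _)
      omega
    have h3 : (C ((N : ℂ) * ω ^ r) * X ^ (N - 1 - r)).natDegree ≤ N - 1 := by
      refine le_trans (natDegree_C_mul_le _ _) ?_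
      simp only [natDegree_X_pow]
      omega
    have := le_trans (natDegree_sub_le _ _) (max_le (le_trans (natDegree_add_le _ _)
      (max_le h1 h2)) h3)
    rw [hPP]
    omega
  have hPP0 : PP = 0 := by
    refine Polynomial.eq_zero_of_natDegree_lt_card_of_eval_eq_zero' PP
      ((range N).image (ω ^ ·)) ?_ ?_
    · intro z hz
      simp only [Finset.mem_image, Finset.mem_range] at hz
      obtain ⟨i, hi, rfl⟩ := hz
      rcases Nat.eq_zero_or_pos i with rfl | hipos
      · -- i = 0 : evaluate at 1
        have hg1 : Polynomial.eval 1 G = N := by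
          rw [hG, Polynomial.eval_prod]
          simp only [Polynomial.eval_sub, Polynomial.eval_X, Polynomial.eval_C]
          exact PF3 hN hω
        simp only [hPP, pow_zero, Polynomial.eval_sub, Polynomial.eval_add, Polynomial.eval_mul,
          Polynomial.eval_C, Polynomial.eval_X, Polynomial.eval_pow, hg1, one_pow]
        ring
      · -- 1 ≤ i ≤ N-1
        have hiN : i ≤ N - 1 := by omega
        have hGi : Polynomial.eval (ω ^ i) G = 0 := by
          rw [hG, Polynomial.eval_prod]
          refine Finset.prod_eq_zero (Finset.mem_Icc.2 ⟨hipos, hiN⟩) ?_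
          simp
        have hsum : Polynomial.eval (ω ^ i) (∑ l ∈ Icc 1 (N - 1), C ((ω ^ (N + 1 - l)) ^ r)
            * ∏ m ∈ (Icc 1 (N - 1)).erase l, (X - C (ω ^ m)))
            = (ω ^ (N + 1 - i)) ^ r * ∏ m ∈ (Icc 1 (N - 1)).erase i, (ω ^ i - ω ^ m) := by
          rw [Polynomial.eval_finset_sum]
          rw [Finset.sum_eq_single_of_mem i (Finset.mem_Icc.2 ⟨hipos, hiN⟩)]
          · simp [Polynomial.eval_prod]
          · intro l hl hli
            have : Polynomial.eval (ω ^ i) (∏ m ∈ (Icc 1 (N - 1)).erase l, (X - C (ω ^ m))) = 0 := by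
              rw [Polynomial.eval_prod]
              refine Finset.prod_eq_zero (Finset.mem_erase.2 ⟨Ne.symm hli, Finset.mem_Icc.2 ⟨hipos, hiN⟩⟩) ?_
              simp
            rw [Polynomial.eval_mul, this, mul_zero]
        -- key root-of-unity product value
        have hP3 := P3 hN hω (Finset.mem_Icc.2 ⟨hipos, hiN⟩)
        have hsplit0 : (range N).erase i = insert 0 ((Icc 1 (N - 1)).erase i) := by
          ext k
          simp only [Finset.mem_erase, Finset.mem_range, Finset.mem_insert, Finset.mem_Icc]
          omega
        have h0notin : (0:ℕ) ∉ (Icc 1 (N - 1)).erase i := by simp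
        rw [hsplit0, Finset.prod_insert h0notin, pow_zero] at hP3
        -- now evaluate PP
        have hkey : (ω ^ i - 1) * ((ω ^ (N + 1 - i)) ^ r * ∏ m ∈ (Icc 1 (N - 1)).erase i, (ω ^ i - ω ^ m))
            = (N : ℂ) * ω ^ r * (ω ^ i) ^ (N - 1 - r) := by
          have hexp : ω ^ (i * (N - 1)) * (ω ^ (N + 1 - i)) ^ r
              = ω ^ r * (ω ^ i) ^ (N - 1 - r) := by
            rw [← pow_mul, ← pow_mul, ← pow_add, ← pow_add]
            have he : i * (N - 1) + (N + 1 - i) * r = (r + i * (N - 1 - r)) + N * r := by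
              zify [show i ≤ N + 1 by omega, show r ≤ N - 1 by omega, show 1 ≤ N by omega]
              ring
            rw [he, pow_add, pow_mul, hω.pow_eq_one, one_pow, mul_one]
          calc (ω ^ i - 1) * ((ω ^ (N + 1 - i)) ^ r * ∏ m ∈ (Icc 1 (N - 1)).erase i, (ω ^ i - ω ^ m))
              = (ω ^ (N + 1 - i)) ^ r * ((ω ^ i - 1) * ∏ m ∈ (Icc 1 (N - 1)).erase i, (ω ^ i - ω ^ m)) := by ring
            _ = (ω ^ (N + 1 - i)) ^ r * (ω ^ (i * (N - 1)) * N) := by rw [hP3]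
            _ = (N : ℂ) * (ω ^ (i * (N - 1)) * (ω ^ (N + 1 - i)) ^ r) := by ring
            _ = (N : ℂ) * (ω ^ r * (ω ^ i) ^ (N - 1 - r)) := by rw [hexp]
            _ = (N : ℂ) * ω ^ r * (ω ^ i) ^ (N - 1 - r) := by ring
        simp only [hPP, Polynomial.eval_sub, Polynomial.eval_add, Polynomial.eval_mul,
          Polynomial.eval_C, Polynomial.eval_X, Polynomial.eval_pow, hGi, hsum]
        rw [mul_zero, zero_add]
        linear_combination hkey
    · rw [Finset.card_image_of_injOn]
      · simpa using hdegPP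
      · intro a ha b hb hab
        exact hω.pow_inj (Finset.mem_range.1 (Finset.mem_coe.1 ha))
          (Finset.mem_range.1 (Finset.mem_coe.1 hb)) hab
  -- now evaluate the zero polynomial at x
  have := congrArg (Polynomial.eval x) hPP0
  simp only [hPP, hG, Polynomial.eval_sub, Polynomial.eval_add, Polynomial.eval_mul,
    Polynomial.eval_C, Polynomial.eval_X, Polynomial.eval_pow, Polynomial.eval_prod,
    Polynomial.eval_finset_sum, Polynomial.eval_zero] at this
  linear_combination this



lemma glne (hN : 0 < N) (hω : IsPrimitiveRoot ω N) {l : ℕ} :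
    ∏ m ∈ (Icc 1 (N - 1)).erase l, ((1:ℂ) - ω ^ m) ≠ 0 := by
  refine Finset.prod_ne_zero_iff.2 fun m hm => ?_
  simp only [mem_erase, mem_Icc] at hm
  have : ω ^ m ≠ 1 := hω.pow_ne_one_of_pos_of_lt (by omega) (by omega)
  intro h
  exact this (by linear_combination -h)

lemma hA (hN : 0 < N) (hω : IsPrimitiveRoot ω N) {v : ℂ} (hv : v ≠ 0) :
    (N : ℂ) * ∏ k ∈ Icc 2 N, af v ω (ω ^ k)
      = v⁻¹ ^ (N - 1) * ∏ m ∈ Icc 1 (N - 1), (v ^ 2 - ω ^ m) := by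
  have hω0 : ω ≠ 0 := hω.ne_zero hN.ne'
  have hN0 : (N : ℂ) ≠ 0 := Nat.cast_ne_zero.2 hN.ne'
  unfold af
  rw [Finset.prod_div_distrib, Finset.prod_mul_distrib, Finset.prod_const, Nat.card_Icc]
  have hnum : ∏ k ∈ Icc 2 N, (v ^ 2 * ω - ω ^ k)
      = ω ^ (N - 1) * ∏ m ∈ Icc 1 (N - 1), (v ^ 2 - ω ^ m) := P1 hω _
  have hden : ∏ k ∈ Icc 2 N, (ω - ω ^ k) = ω ^ (N - 1) * N := by
    have := P1 hω 1
    simp only [one_mul] at this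
    rw [this, PF3 hN hω]
  rw [hnum, hden]
  have hpow : ω ^ (N - 1) ≠ 0 := pow_ne_zero _ hω0
  have h12 : N + 1 - 2 = N - 1 := by omega
  rw [h12]
  field_simp

lemma hB (hN : 0 < N) (hω : IsPrimitiveRoot ω N) {v : ℂ} (hv : v ≠ 0) {j : ℕ}
    (hj : j ∈ Icc 2 N) :
    (N : ℂ) * (bf v ω (ω ^ j) * ∏ k ∈ (Icc 2 N).erase j, af v (ω ^ j) (ω ^ k))
      = v⁻¹ ^ (N - 1) * (v ^ 2 - 1)
          * ∏ m ∈ (Icc 1 (N - 1)).erase (N + 1 - j), (v ^ 2 - ω ^ m) := by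
  have hω0 : ω ≠ 0 := hω.ne_zero hN.ne'
  have hN0 : (N : ℂ) ≠ 0 := Nat.cast_ne_zero.2 hN.ne'
  simp only [mem_Icc] at hj
  have hl : N + 1 - j ∈ Icc 1 (N - 1) := by simp only [mem_Icc]; omega
  have hωj : ω ^ j * ω ^ (N + 1 - j) = ω := by
    rw [← pow_add]
    have : j + (N + 1 - j) = N + 1 := by omega
    rw [this, pow_succ, hω.pow_eq_one, one_mul]
  have hgl1 : (1 - ω ^ (N + 1 - j)) * ∏ m ∈ (Icc 1 (N - 1)).erase (N + 1 - j), ((1:ℂ) - ω ^ m)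
      = N := by
    rw [Finset.mul_prod_erase _ (fun m => (1:ℂ) - ω ^ m) hl]
    exact PF3 hN hω
  have hgl1ne : ∏ m ∈ (Icc 1 (N - 1)).erase (N + 1 - j), ((1:ℂ) - ω ^ m) ≠ 0 := glne hN hω
  have hcard : #((Icc 2 N).erase j) = N - 2 := by
    rw [Finset.card_erase_of_mem (by simp only [mem_Icc]; omega), Nat.card_Icc]; omega
  unfold af bf
  rw [Finset.prod_div_distrib, Finset.prod_mul_distrib, Finset.prod_const, hcard]
  have hnum : ∏ k ∈ (Icc 2 N).erase j, (v ^ 2 * ω ^ j - ω ^ k)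
      = ω ^ (j * (N - 2)) * ∏ m ∈ (Icc 1 (N - 1)).erase (N + 1 - j), (v ^ 2 - ω ^ m) :=
    P2 hN hω (by simp only [mem_Icc]; omega) _
  have hden : ∏ k ∈ (Icc 2 N).erase j, (ω ^ j - ω ^ k)
      = ω ^ (j * (N - 2)) * ∏ m ∈ (Icc 1 (N - 1)).erase (N + 1 - j), ((1:ℂ) - ω ^ m) := by
    have := P2 hN hω (by simp only [mem_Icc]; omega : j ∈ Icc 2 N) 1
    simpa only [one_mul] using this
  rw [hnum, hden]
  have hωωj : ω - ω ^ j ≠ 0 := by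
    refine sub_ne_zero.2 ?_
    have := hdist hN hω (j := 1) (k := j) le_rfl (by omega) (by omega) (by omega) (by omega)
    simpa using this
  have hpow : ω ^ (j * (N - 2)) ≠ 0 := pow_ne_zero _ hω0
  have hN2 : N - 2 + 1 = N - 1 := by omega
  have hden2 : (ω - ω ^ j) * ∏ m ∈ (Icc 1 (N - 1)).erase (N + 1 - j), ((1:ℂ) - ω ^ m)
      = -(ω ^ j * N) := by
    linear_combination (-(∏ m ∈ (Icc 1 (N - 1)).erase (N + 1 - j), ((1:ℂ) - ω ^ m))) * hωj
      - ω ^ j * hgl1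
  have hv2 : v⁻¹ ^ (N - 1) = v⁻¹ ^ (N - 2) * v⁻¹ := by rw [← pow_succ, hN2]
  rw [div_mul_div_comm, mul_div_assoc', div_eq_iff (mul_ne_zero hωωj (mul_ne_zero hpow hgl1ne)), hv2]
  linear_combination (-(v ⁻¹ ^ (N - 2) * v⁻¹ * (v ^ 2 - 1) * ω ^ (j * (N - 2))
    * ∏ m ∈ (Icc 1 (N - 1)).erase (N + 1 - j), (v ^ 2 - ω ^ m))) * hden2

lemma hvv {N r : ℕ} (hr : r < N) {v : ℂ} (hv : v ≠ 0) :
    v⁻¹ ^ (N - 1) * (v ^ 2) ^ (N - 1 - r) = v ^ (N - 1) * ((v ^ 2)⁻¹) ^ r := by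
  have h2 : v ^ 2 ≠ 0 := pow_ne_zero _ hv
  rw [inv_pow, inv_pow]
  field_simp
  rw [← pow_add, show N - 1 - r + r = N - 1 by omega, ← pow_mul, ← pow_mul, mul_comm]

lemma monoVal {N : ℕ} {ω : ℂ} (hN : 0 < N) (hω : IsPrimitiveRoot ω N) {v : ℂ} (hv : v ≠ 0)
    {r : ℕ} (hr : r < N) :
    (∏ k ∈ Icc 2 N, af v ω (ω ^ k)) * ω ^ r
      + ∑ j ∈ Icc 2 N, bf v ω (ω ^ j) * (∏ k ∈ (Icc 2 N).erase j, af v (ω ^ j) (ω ^ k)) * (ω ^ j) ^ r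
      = v ^ (N - 1) * ((v ^ 2)⁻¹ * ω) ^ r := by
  have hN0 : (N : ℂ) ≠ 0 := Nat.cast_ne_zero.2 hN.ne'
  refine mul_left_cancel₀ hN0 ?_
  rw [mul_add, ← mul_assoc, hA hN hω hv, Finset.mul_sum]
  have hterm : ∀ j ∈ Icc 2 N,
      (N : ℂ) * (bf v ω (ω ^ j) * (∏ k ∈ (Icc 2 N).erase j, af v (ω ^ j) (ω ^ k)) * (ω ^ j) ^ r)
        = (v⁻¹ ^ (N - 1) * (v ^ 2 - 1)
            * ∏ m ∈ (Icc 1 (N - 1)).erase (N + 1 - j), (v ^ 2 - ω ^ m)) * (ω ^ j) ^ r := by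
    intro j hj
    rw [← hB hN hω hv hj]
    ring
  rw [Finset.sum_congr rfl hterm]
  have hre : ∑ j ∈ Icc 2 N,
      (v⁻¹ ^ (N - 1) * (v ^ 2 - 1)
        * ∏ m ∈ (Icc 1 (N - 1)).erase (N + 1 - j), (v ^ 2 - ω ^ m)) * (ω ^ j) ^ r
      = ∑ l ∈ Icc 1 (N - 1),
        (v⁻¹ ^ (N - 1) * (v ^ 2 - 1)
          * ∏ m ∈ (Icc 1 (N - 1)).erase l, (v ^ 2 - ω ^ m)) * (ω ^ (N + 1 - l)) ^ r := by
    refine Finset.sum_bij' (fun j _ => N + 1 - j) (fun l _ => N + 1 - l) ?_ ?_ ?_ ?_ ?_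
    · intro a ha; simp only [mem_Icc] at ha ⊢; omega
    · intro a ha; simp only [mem_Icc] at ha ⊢; omega
    · intro a ha; simp only [mem_Icc] at ha; beta_reduce; omega
    · intro a ha; simp only [mem_Icc] at ha; beta_reduce; omega
    · intro a ha
      simp only [mem_Icc] at ha
      have h1 : N + 1 - (N + 1 - a) = a := by omega
      rw [h1]
  rw [hre]
  have hsimp : ∑ l ∈ Icc 1 (N - 1),
      (v⁻¹ ^ (N - 1) * (v ^ 2 - 1)
        * ∏ m ∈ (Icc 1 (N - 1)).erase l, (v ^ 2 - ω ^ m)) * (ω ^ (N + 1 - l)) ^ r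
      = (v⁻¹ ^ (N - 1) * (v ^ 2 - 1)) * ∑ l ∈ Icc 1 (N - 1),
          (ω ^ (N + 1 - l)) ^ r * ∏ m ∈ (Icc 1 (N - 1)).erase l, (v ^ 2 - ω ^ m) := by
    rw [Finset.mul_sum]
    exact Finset.sum_congr rfl fun l _ => by ring
  rw [hsimp]
  have hcore := CORE hN hω hr (v ^ 2)
  have hv2 := hvv hr hv
  linear_combination v⁻¹ ^ (N - 1) * hcore + (N : ℂ) * (ω ^ r) * hv2

lemma rhs_final {N : ℕ} {ω : ℂ} (hN : 0 < N) (hω : IsPrimitiveRoot ω N) {v : ℂ} (hv : v ≠ 0)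
    {P : Polynomial ℂ} (hdeg : P.natDegree < N) :
    rhs v ω P N 2 ω = v ^ (N - 1) * P.eval ((v ^ 2)⁻¹ * ω) := by
  unfold rhs
  calc (∏ k ∈ Icc 2 N, af v ω (ω ^ k)) * P.eval ω
        + ∑ j ∈ Icc 2 N,
            bf v ω (ω ^ j) * (∏ k ∈ (Icc 2 N).erase j, af v (ω ^ j) (ω ^ k)) * P.eval (ω ^ j)
      = ∑ r ∈ range N, P.coeff r * ((∏ k ∈ Icc 2 N, af v ω (ω ^ k)) * ω ^ r
          + ∑ j ∈ Icc 2 N,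
              bf v ω (ω ^ j) * (∏ k ∈ (Icc 2 N).erase j, af v (ω ^ j) (ω ^ k)) * (ω ^ j) ^ r) := by
        rw [Polynomial.eval_eq_sum_range' hdeg ω]
        rw [Finset.sum_congr rfl (fun j (hj : j ∈ Icc 2 N) => by
          rw [Polynomial.eval_eq_sum_range' hdeg (ω ^ j), Finset.mul_sum])]
        rw [Finset.sum_comm, Finset.mul_sum, ← Finset.sum_add_distrib]
        refine Finset.sum_congr rfl fun r _ => ?_
        have h1 : ∑ j ∈ Icc 2 N,
            bf v ω (ω ^ j) * (∏ k ∈ (Icc 2 N).erase j, af v (ω ^ j) (ω ^ k))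
              * (P.coeff r * (ω ^ j) ^ r)
            = P.coeff r * ∑ j ∈ Icc 2 N,
                bf v ω (ω ^ j) * (∏ k ∈ (Icc 2 N).erase j, af v (ω ^ j) (ω ^ k)) * (ω ^ j) ^ r := by
          rw [Finset.mul_sum]
          exact Finset.sum_congr rfl fun j _ => by ring
        rw [h1]
        ring
    _ = ∑ r ∈ range N, P.coeff r * (v ^ (N - 1) * ((v ^ 2)⁻¹ * ω) ^ r) :=
        Finset.sum_congr rfl fun r hr => by
          rw [monoVal hN hω hv (Finset.mem_range.1 hr)]
    _ = v ^ (N - 1) * P.eval ((v ^ 2)⁻¹ * ω) := by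
        rw [Polynomial.eval_eq_sum_range' hdeg, Finset.mul_sum]
        exact Finset.sum_congr rfl fun r _ => by ring


lemma rhs_base {N : ℕ} (v ω : ℂ) (P : Polynomial ℂ) (ζ : ℂ) :
    rhs v ω P N (N + 1) ζ = P.eval ζ := by
  unfold rhs
  rw [Finset.Icc_eq_empty (by omega)]
  simp

end Aux

namespace Stmt7

open MvPolynomial

/-- The polynomial ring `ℂ[z₀, z₁, z₂, …]`; only the variables `z_1, …, z_N` are used. -/
abbrev R : Type := MvPolynomial ℕ ℂ

/-- The field `K` of rational functions in the variables. -/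
abbrev K : Type := FractionRing R

/-- The variable `z_i` as an element of `K`. -/
def Z (i : ℕ) : K := algebraMap R K (X i)

/-- A complex constant as an element of `K`. -/
def cc (c : ℂ) : K := algebraMap R K (C c)

/-- Lift an injective ring endomorphism of `R` to `K`. -/
def liftRingHom (f : R →+* R) (hf : Function.Injective f) : K →+* K :=
  IsFractionRing.lift (g := (algebraMap R K).comp f)
    (by
      rw [RingHom.coe_comp]
      exact (IsFractionRing.injective R K).comp hf)

/-- The automorphism `s_{ij}` of `K` interchanging `z_i` and `z_j` (and fixing the other
variables). -/
def swapK (i j : ℕ) : K →+* K :=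
  liftRingHom (rename (Equiv.swap i j)).toRingHom
    (rename_injective _ (Equiv.swap i j).injective)

/-- The algebra endomorphism of `R` with `z_i ↦ c·z_i`, fixing the other variables. -/
def scaleHom (c : ℂ) (i : ℕ) : R →ₐ[ℂ] R :=
  aeval fun k => if k = i then C c * X k else X k

lemma scaleHom_comp (c : ℂ) (hc : c ≠ 0) (i : ℕ) :
    (scaleHom c⁻¹ i).comp (scaleHom c i) = AlgHom.id ℂ R := by
  apply algHom_ext
  intro k
  by_cases h : k = i
  · subst h
    simp only [scaleHom, AlgHom.coe_comp, Function.comp_apply, aeval_X, if_pos, map_mul,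
      aeval_C, AlgHom.coe_id, id_eq, algebraMap_eq]
    rw [← mul_assoc, ← C_mul, mul_inv_cancel₀ hc, C_1, one_mul]
  · simp [scaleHom, h]

lemma scaleHom_injective (c : ℂ) (hc : c ≠ 0) (i : ℕ) :
    Function.Injective (scaleHom c i) := by
  intro p p' hpp'
  have h1 := DFunLike.congr_fun (scaleHom_comp c hc i) p
  have h2 := DFunLike.congr_fun (scaleHom_comp c hc i) p'
  simp only [AlgHom.coe_comp, Function.comp_apply, AlgHom.coe_id, id_eq] at h1 h2
  rw [← h1, ← h2, hpp']

/-- The automorphism `ĉ_i : z_i ↦ c·z_i` of `K` (defined as the identity when `c = 0`). -/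
def scaleK (c : ℂ) (i : ℕ) : K →+* K :=
  if hc : c = 0 then RingHom.id K
  else liftRingHom (scaleHom c i).toRingHom (scaleHom_injective c hc i)

/-- `a_{ij} = v⁻¹·(t·z_i − z_j)/(z_i − z_j)` where `t = v²`. -/
def aa (v : ℂ) (i j : ℕ) : K := cc v⁻¹ * (cc (v ^ 2) * Z i - Z j) / (Z i - Z j)

/-- `b_{ij} = −v⁻¹·(t − 1)·z_j/(z_i − z_j)` where `t = v²`. -/
def bb (v : ℂ) (i j : ℕ) : K := -(cc v⁻¹ * (cc (v ^ 2) - 1) * Z j) / (Z i - Z j)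

/-- The operator `x_{ij}` (for `i < j`: `a_{ij} + b_{ij}·s_{ij}`; for `i > j`:
`a_{ij} − b_{ji}·s_{ij}`). -/
def xop (v : ℂ) (i j : ℕ) : K → K := fun p =>
  if i < j then aa v i j * p + bb v i j * swapK i j p
  else aa v i j * p - bb v j i * swapK i j p

/-- Composition of a list of operators (the head of the list acts last). -/
def compList {α : Type*} (l : List (α → α)) : α → α := l.foldr (· ∘ ·) id

/-- The q-deformed Dunkl–Cherednik operator
`Y_i = x_{i,i+1}∘⋯∘x_{i,N}∘ q̂_i ∘ x_{i,1}∘⋯∘x_{i,i−1}` in the variables `z_1, …, z_N`,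
with parameters `v` (so `t = v²`) and `q`. -/
def Yop (v q : ℂ) (N i : ℕ) : K → K :=
  compList ((List.range' (i + 1) (N - i)).map fun j => xop v i j) ∘
    ⇑(scaleK q i) ∘
      compList ((List.range' 1 (i - 1)).map fun j => xop v i j)

/-- The primitive `N`-th root of unity `ω = exp(2πi/N)`. -/
def omega (N : ℕ) : ℂ := Complex.exp (2 * (Real.pi : ℂ) * Complex.I / (N : ℂ))

-- ============ new lemmas ============

set_option maxHeartbeats 1000000
set_option synthInstance.maxHeartbeats 1000000

lemma swapK_algebraMap (i j : ℕ) (p : R) :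
    swapK i j (algebraMap R K p) = algebraMap R K (rename (Equiv.swap i j) p) := by
  unfold swapK liftRingHom
  rw [IsFractionRing.lift_algebraMap]
  rfl

lemma Z_sub_ne {i j : ℕ} (h : i ≠ j) : Z i - Z j ≠ 0 := by
  unfold Z
  rw [← map_sub]
  intro hc
  have := (map_eq_zero_iff _ (IsFractionRing.injective R K)).1 hc
  exact h (X_injective (sub_eq_zero.1 this))

lemma cc_ne {c : ℂ} (h : c ≠ 0) : cc c ≠ 0 := by
  unfold cc
  rw [map_ne_zero_iff _ (IsFractionRing.injective R K)]
  simpa using h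

/-- substitution z_j ↦ z_i -/
def subst (i j : ℕ) : R →ₐ[ℂ] R := aeval fun k => if k = j then X i else X k

lemma dvd_sub_subst (i j : ℕ) (p : R) : (X i - X j : R) ∣ (p - subst i j p) := by
  induction p using MvPolynomial.induction_on with
  | C a => simp [subst]
  | add p q hp hq =>
      have : p + q - subst i j (p + q) = (p - subst i j p) + (q - subst i j q) := by
        rw [map_add]; ring
      rw [this]
      exact dvd_add hp hq
  | mul_X p k hp =>
      have : p * X k - subst i j (p * X k)
          = (p - subst i j p) * X k + subst i j p * (X k - subst i j (X k)) := by
        rw [map_mul]; ring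
      rw [this]
      refine dvd_add (Dvd.dvd.mul_right hp _) (Dvd.dvd.mul_left ?_ _)
      by_cases hk : k = j
      · subst hk
        refine ⟨-1, ?_⟩
        simp only [subst, aeval_X, if_pos rfl, if_true, eq_self_iff_true]
        ring
      · simp [subst, hk]

lemma subst_rename_swap (i j : ℕ) (hij : i ≠ j) (p : R) :
    subst i j (rename (Equiv.swap i j) p) = subst i j p := by
  have : (subst i j).comp ((rename (Equiv.swap i j)).restrictScalars ℂ) = subst i j := by
    apply algHom_ext
    intro k
    simp only [AlgHom.coe_comp, Function.comp_apply, AlgHom.coe_restrictScalars', rename_X]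
    rcases eq_or_ne k i with rfl | hki
    · rw [Equiv.swap_apply_left]
      simp [subst, hij.symm]
    · rcases eq_or_ne k j with rfl | hkj
      · rw [Equiv.swap_apply_right]
        simp [subst, hij.symm]
      · rw [Equiv.swap_apply_of_ne_of_ne hki hkj]
  exact DFunLike.congr_fun this p

/-- existence of the polynomial quotient -/
lemma step_exists (v : ℂ) (hv : v ≠ 0) (j : ℕ) (hj : 1 < j) (Qn : R) :
    ∃ Qm : R, C v * ((X 1 - X j) * Qm)
      = (C (v ^ 2) * X 1 - X j) * Qn
        - (C (v ^ 2) - C 1) * (X j * rename (Equiv.swap 1 j) Qn) := by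
  set Num : R := (C (v ^ 2) * X 1 - X j) * Qn
      - (C (v ^ 2) - C 1) * (X j * rename (Equiv.swap 1 j) Qn) with hNum
  have h1j : (1 : ℕ) ≠ j := hj.ne
  have hsub : subst 1 j Num = 0 := by
    rw [hNum]
    simp only [map_sub, map_mul, subst_rename_swap 1 j h1j]
    simp only [subst, aeval_X, aeval_C, if_pos rfl, if_true, eq_self_iff_true, if_neg h1j, MvPolynomial.algebraMap_eq,
      map_one]
    ring
  have hdvd : (X 1 - X j : R) ∣ Num := by
    have := dvd_sub_subst 1 j Num
    rwa [hsub, sub_zero] at this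
  obtain ⟨S, hS⟩ := hdvd
  refine ⟨C v⁻¹ * S, ?_⟩
  rw [hS]
  have hcc : (C v : R) * C v⁻¹ = 1 := by rw [← C_mul, mul_inv_cancel₀ hv, C_1]
  linear_combination ((X 1 : R) - X j) * S * hcc

/-- K-level step -/
lemma xop_algebraMap (v : ℂ) (hv : v ≠ 0) (j : ℕ) (hj : 1 < j) (Qn Qm : R)
    (hid : C v * ((X 1 - X j) * Qm)
      = (C (v ^ 2) * X 1 - X j) * Qn
        - (C (v ^ 2) - C 1) * (X j * rename (Equiv.swap 1 j) Qn)) :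
    xop v 1 j (algebraMap R K Qn) = algebraMap R K Qm := by
  have hZ : Z 1 - Z j ≠ 0 := Z_sub_ne (by omega)
  have hcv : cc v ≠ 0 := cc_ne hv
  unfold xop
  rw [if_pos hj]
  have key : cc v * ((Z 1 - Z j) * (aa v 1 j * algebraMap R K Qn
      + bb v 1 j * swapK 1 j (algebraMap R K Qn)))
      = cc v * ((Z 1 - Z j) * algebraMap R K Qm) := by
    rw [swapK_algebraMap]
    unfold aa bb
    have e1 : (Z 1 - Z j) * (cc v⁻¹ * (cc (v ^ 2) * Z 1 - Z j) / (Z 1 - Z j)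
          * algebraMap R K Qn)
        = cc v⁻¹ * ((cc (v ^ 2) * Z 1 - Z j) * algebraMap R K Qn) := by
      field_simp
    have e2 : (Z 1 - Z j) * (-(cc v⁻¹ * (cc (v ^ 2) - 1) * Z j) / (Z 1 - Z j)
          * algebraMap R K (rename (Equiv.swap 1 j) Qn))
        = -(cc v⁻¹ * ((cc (v ^ 2) - 1)
            * (Z j * algebraMap R K (rename (Equiv.swap 1 j) Qn)))) := by
      field_simp
    rw [mul_add, e1, e2]
    have hvv : cc v * cc v⁻¹ = 1 := by
      unfold cc
      rw [← map_mul, ← C_mul, mul_inv_cancel₀ hv, C_1, map_one]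
    have himg : cc v * ((Z 1 - Z j) * algebraMap R K Qm)
        = (cc (v ^ 2) * Z 1 - Z j) * algebraMap R K Qn
          - (cc (v ^ 2) - 1) * (Z j * algebraMap R K (rename (Equiv.swap 1 j) Qn)) := by
      unfold cc Z
      have := congrArg (algebraMap R K) hid
      simpa only [map_mul, map_sub, map_one, C_1] using this
    linear_combination (-1 : K) * himg
      + ((cc (v ^ 2) * Z 1 - Z j) * algebraMap R K Qn
          - (cc (v ^ 2) - 1) * (Z j * algebraMap R K (rename (Equiv.swap 1 j) Qn))) * hvv
  have := mul_left_cancel₀ hcv key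
  exact mul_left_cancel₀ hZ this

lemma eval_step (v : ℂ) (j : ℕ) (Qn Qm : R)
    (hid : C v * ((X 1 - X j) * Qm)
      = (C (v ^ 2) * X 1 - X j) * Qn
        - (C (v ^ 2) - C 1) * (X j * rename (Equiv.swap 1 j) Qn)) (e : ℕ → ℂ) :
    v * ((e 1 - e j) * eval e Qm)
      = (v ^ 2 * e 1 - e j) * eval e Qn
        - (v ^ 2 - 1) * (e j * eval (e ∘ Equiv.swap 1 j) Qn) := by
  have := congrArg (eval e) hid
  simpa only [map_mul, map_sub, map_one, eval_C, eval_X, eval_rename] using this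

lemma eval_aeval (e : ℕ → ℂ) (P : Polynomial ℂ) :
    eval e (Polynomial.aeval (X 1 : R) P) = P.eval (e 1) := by
  induction P using Polynomial.induction_on' with
  | add p q hp hq => simp [hp, hq]
  | monomial n a =>
      simp [Polynomial.aeval_monomial, MvPolynomial.algebraMap_eq, Polynomial.eval_monomial]

/-- For a one-variable polynomial `P` of degree at most `N − 1`, the element
`Y_1^∘(P(z_1)) = x_{12}∘⋯∘x_{1N}(P(z_1))` is a polynomial in `z_1, …, z_N`, and its evaluation
at `(ω, ω², …, ω^N)` equals `v^{N−1}·P(t⁻¹·ω)`. -/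
theorem Y1_classical_eval (N : ℕ) (hN : 0 < N) (v : ℂ) (hv : v ≠ 0)
    (P : Polynomial ℂ) (hdeg : P.natDegree ≤ N - 1) :
    ∃ Q : R,
      algebraMap R K Q
          = compList ((List.range' 2 (N - 1)).map fun j => xop v 1 j)
              (algebraMap R K (Polynomial.aeval (X 1 : R) P)) ∧
        eval (fun j => omega N ^ j) Q = v ^ (N - 1) * Polynomial.eval ((v ^ 2)⁻¹ * omega N) P := by
  have hω : IsPrimitiveRoot (omega N) N := Complex.isPrimitiveRoot_exp N hN.ne'
  set ω := omega N with hωdef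
  have main : ∀ n : ℕ, n ≤ N - 1 → ∃ Q : R,
      algebraMap R K Q = compList ((List.range' (N + 1 - n) n).map fun j => xop v 1 j)
          (algebraMap R K (Polynomial.aeval (X 1 : R) P))
      ∧ ∀ e : ℕ → ℂ, (∀ k, N + 1 - n ≤ k → k ≤ N → e k = ω ^ k)
          → (∀ k, N + 1 - n ≤ k → k ≤ N → e 1 ≠ ω ^ k)
          → eval e Q = Aux.rhs v ω P N (N + 1 - n) (e 1) := by
    intro n
    induction n with
    | zero =>
        intro _
        refine ⟨Polynomial.aeval (X 1 : R) P, by simp [compList], fun e _ _ => ?_⟩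
        rw [eval_aeval]
        simp only [Nat.sub_zero]
        rw [Aux.rhs_base]
    | succ n ih =>
        intro hn1
        obtain ⟨Qn, hQn, hEn⟩ := ih (by omega)
        have hm : N + 1 - (n + 1) = N - n := by omega
        have hm2 : N + 1 - n = (N - n) + 1 := by omega
        rw [hm]
        rw [hm2] at hQn hEn
        set j := N - n with hjdef
        have hj2 : 2 ≤ j := by omega
        have hjN : j ≤ N := by omega
        obtain ⟨Qm, hid⟩ := step_exists v hv j (by omega) Qn
        refine ⟨Qm, ?_, ?_⟩
        · rw [show compList ((List.range' j (n + 1)).map fun i => xop v 1 i)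
              = (xop v 1 j) ∘ compList ((List.range' (j + 1) n).map fun i => xop v 1 i) from by
            rw [List.range'_succ, List.map_cons]; rfl]
          rw [Function.comp_apply, ← hQn, xop_algebraMap v hv j (by omega) Qn Qm hid]
        · intro e he hne
          have heval := eval_step v j Qn Qm hid e
          have hej : e j = ω ^ j := he j le_rfl hjN
          have hQn1 : eval e Qn = Aux.rhs v ω P N (j + 1) (e 1) :=
            hEn e (fun k hk1 hk2 => he k (by omega) hk2)
              (fun k hk1 hk2 => hne k (by omega) hk2)
          have hQn2 : eval (e ∘ Equiv.swap 1 j) Qn = Aux.rhs v ω P N (j + 1) (ω ^ j) := by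
            have hs1 : (e ∘ Equiv.swap 1 j) 1 = ω ^ j := by
              simp only [Function.comp_apply, Equiv.swap_apply_left]
              exact hej
            have := hEn (e ∘ Equiv.swap 1 j)
              (fun k hk1 hk2 => by
                simp only [Function.comp_apply,
                  Equiv.swap_apply_of_ne_of_ne (by omega : k ≠ 1) (by omega : k ≠ j)]
                exact he k (by omega) hk2)
              (fun k hk1 hk2 => by
                rw [hs1]
                exact Aux.hdist hN hω (by omega) hjN (by omega) hk2 (by omega))
            rwa [hs1] at this
          rw [hej, hQn1, hQn2] at heval
          have hstep := Aux.rhs_step hN hω hv P hj2 hjN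
            (fun k hk1 hk2 => hne k hk1 hk2)
          have hz : e 1 - ω ^ j ≠ 0 := sub_ne_zero.2 (hne j le_rfl hjN)
          have hvv : v * v⁻¹ = 1 := mul_inv_cancel₀ hv
          have h2 : v * ((e 1 - ω ^ j) * Aux.rhs v ω P N j (e 1))
              = (v ^ 2 * e 1 - ω ^ j) * Aux.rhs v ω P N (j + 1) (e 1)
                - (v ^ 2 - 1) * (ω ^ j * Aux.rhs v ω P N (j + 1) (ω ^ j)) := by
            linear_combination v * hstep
              + ((v ^ 2 * e 1 - ω ^ j) * Aux.rhs v ω P N (j + 1) (e 1)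
                - (v ^ 2 - 1) * (ω ^ j * Aux.rhs v ω P N (j + 1) (ω ^ j))) * hvv
          have := mul_left_cancel₀ hv (heval.trans h2.symm)
          exact mul_left_cancel₀ hz this
  obtain ⟨Q, hQ, hE⟩ := main (N - 1) le_rfl
  have h2 : N + 1 - (N - 1) = 2 := by omega
  rw [h2] at hQ hE
  refine ⟨Q, hQ, ?_⟩
  have he := hE (fun k => ω ^ k) (fun k _ _ => rfl)
    (fun k hk1 hk2 => by
      show ω ^ 1 ≠ ω ^ k
      exact Aux.hdist hN hω le_rfl hN (by omega) hk2 (by omega))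
  have hb : (fun k => ω ^ k) 1 = ω := pow_one ω
  rw [he, pow_one]
  exact Aux.rhs_final hN hω hv (by omega)



end Stmt7
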